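/- Let G and H be two nonempty bounded subsets of a uniformly convex Banach space E with G convex. Then the pair (G,H) has property strongly UC. -/

import Mathlib

open Metric Filter Set

/-- Distance between two sets: `σ(G,H) = inf {σ(u,v) : u ∈ G, v ∈ H}`. -/
noncomputable def setDist {E : Type*} [MetricSpace E] (G H : Set E) : ℝ :=
  sInf (Set.image2 dist G H)

/-- The pair `(G,H)` has property UC. -/
def PropUC {E : Type*} [MetricSpace E] (G H : Set E) : Prop :=
  ∀ u z v : ℕ → E, (∀ n, u n ∈ G) → (∀ n, z n ∈ G) → (∀ n, v n ∈ H) →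
    Tendsto (fun n => dist (u n) (v n)) atTop (nhds (setDist G H)) →
    Tendsto (fun n => dist (z n) (v n)) atTop (nhds (setDist G H)) →
    Tendsto (fun n => dist (u n) (z n)) atTop (nhds 0)

/-- The pair `(G,H)` has property strongly UC. -/
def PropSUC {E : Type*} [MetricSpace E] (G H : Set E) : Prop :=
  ∀ u z v : ℕ → E, (∀ n, u n ∈ G) → (∀ n, z n ∈ G) → (∀ n, v n ∈ H) →
    Tendsto (fun n => dist (u n) (v n) - Metric.infDist (v n) G) atTop (nhds 0) →
    Tendsto (fun n => dist (z n) (v n) - Metric.infDist (v n) G) atTop (nhds 0) →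
    Tendsto (fun n => dist (u n) (z n)) atTop (nhds 0)

/-- Scaled form of uniform convexity. -/
lemma uc_scaled {E : Type*} [NormedAddCommGroup E] [NormedSpace ℝ E] [UniformConvexSpace E]
    {ε : ℝ} (hε : 0 < ε) :
    ∃ δ : ℝ, 0 < δ ∧ δ ≤ 1 ∧ ∀ (s : ℝ) (x y : E), 0 < s → ‖x‖ ≤ s → ‖y‖ ≤ s →
      ε * s ≤ ‖x - y‖ → ‖x + y‖ ≤ (2 - δ) * s := by
  obtain ⟨δ, hδ, h⟩ := exists_forall_closed_ball_dist_add_le_two_sub E hε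
  refine ⟨min δ 1, lt_min hδ one_pos, min_le_right _ _, fun s x y hs hx hy hxy => ?_⟩
  have hs' : s ≠ 0 := ne_of_gt hs
  have hx1 : ‖s⁻¹ • x‖ ≤ 1 := by
    rw [norm_smul, norm_inv, Real.norm_of_nonneg hs.le]
    rw [inv_mul_le_iff₀ hs, mul_one]; exact hx
  have hy1 : ‖s⁻¹ • y‖ ≤ 1 := by
    rw [norm_smul, norm_inv, Real.norm_of_nonneg hs.le]
    rw [inv_mul_le_iff₀ hs, mul_one]; exact hy
  have hxy1 : ε ≤ ‖s⁻¹ • x - s⁻¹ • y‖ := by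
    rw [← smul_sub, norm_smul, norm_inv, Real.norm_of_nonneg hs.le, le_inv_mul_iff₀ hs]
    linarith
  have := h hx1 hy1 hxy1
  rw [← smul_add, norm_smul, norm_inv, Real.norm_of_nonneg hs.le, inv_mul_le_iff₀ hs] at this
  calc ‖x + y‖ ≤ (2 - δ) * s := by linarith [this]
    _ ≤ (2 - min δ 1) * s := by
        have : min δ 1 ≤ δ := min_le_left _ _
        nlinarith

/-- Let `G` and `H` be nonempty bounded subsets of a uniformly convex Banach space
with `G` convex. Then `(G,H)` has property strongly UC. -/
theorem propSUC_of_uniformConvex {E : Type*} [NormedAddCommGroup E] [NormedSpace ℝ E]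
    [CompleteSpace E] [UniformConvexSpace E]
    (G H : Set E) (hG : G.Nonempty) (hH : H.Nonempty)
    (hGb : Bornology.IsBounded G) (hHb : Bornology.IsBounded H)
    (hGconv : Convex ℝ G) : PropSUC G H := by
  intro u z v hu hz hv hud hzd
  -- notation
  set c : ℕ → ℝ := fun n => Metric.infDist (v n) G with hc
  -- bound R
  obtain ⟨r, hr⟩ := (hGb.union hHb).subset_closedBall hG.some
  set R : ℝ := max (2 * r) 1 with hR
  have hR0 : (0:ℝ) < R := lt_of_lt_of_le one_pos (le_max_right _ _)
  have hdb : ∀ (a b : E), a ∈ G ∪ H → b ∈ G ∪ H → dist a b ≤ R := by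
    intro a b ha hb
    have h1 := hr ha
    have h2 := hr hb
    simp only [Metric.mem_closedBall] at h1 h2
    calc dist a b ≤ dist a hG.some + dist hG.some b := dist_triangle _ _ _
      _ ≤ r + r := add_le_add h1 (by rwa [dist_comm])
      _ = 2 * r := by ring
      _ ≤ R := le_max_left _ _
  -- auxiliary error sequence
  set t : ℕ → ℝ := fun n =>
    max (dist (u n) (v n) - c n) (max (dist (z n) (v n) - c n) 0) with ht
  have ht0 : ∀ n, 0 ≤ t n := fun n => le_max_of_le_right (le_max_right _ _)
  have htt : Tendsto t atTop (nhds 0) := by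
    have h3 : Tendsto (fun _ : ℕ => (0:ℝ)) atTop (nhds 0) := tendsto_const_nhds
    have := hud.max (hzd.max h3)
    simpa using this
  have hcn : ∀ n, 0 ≤ c n := fun n => Metric.infDist_nonneg
  have hau : ∀ n, dist (u n) (v n) ≤ c n + t n := fun n => by
    have : dist (u n) (v n) - c n ≤ t n := le_max_left _ _
    linarith
  have haz : ∀ n, dist (z n) (v n) ≤ c n + t n := fun n => by
    have : dist (z n) (v n) - c n ≤ t n := le_max_of_le_right (le_max_left _ _)
    linarith
  -- midpoint estimate: 2 c n ≤ ‖(u n - v n) + (z n - v n)‖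
  have hmid : ∀ n, 2 * c n ≤ ‖(u n - v n) + (z n - v n)‖ := by
    intro n
    have hm : midpoint ℝ (u n) (z n) ∈ G :=
      hGconv.segment_subset (hu n) (hz n) (midpoint_mem_segment _ _)
    have h1 : c n ≤ dist (midpoint ℝ (u n) (z n)) (v n) := by
      rw [dist_comm]; exact Metric.infDist_le_dist_of_mem hm
    have h2 : dist (midpoint ℝ (u n) (z n)) (v n)
        = ‖(u n - v n) + (z n - v n)‖ / 2 := by
      rw [dist_eq_norm, show midpoint ℝ (u n) (z n) - v n
          = (2:ℝ)⁻¹ • ((u n - v n) + (z n - v n)) by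
        rw [midpoint_eq_smul_add, invOf_eq_inv]; module, norm_smul]
      norm_num
      ring
    rw [h2] at h1
    linarith
  -- main estimate
  rw [Metric.tendsto_atTop]
  intro ε hε
  obtain ⟨δ, hδ0, hδ1, hδ⟩ := uc_scaled (E := E) (show (0:ℝ) < ε / (2 * R) by positivity)
  set τ : ℝ := ε * δ / 6 with hτ
  have hτ0 : 0 < τ := by positivity
  have : ∀ᶠ n in atTop, t n < τ := by
    have := Metric.tendsto_atTop.1 htt
    obtain ⟨N, hN⟩ := this τ hτ0
    exact Filter.eventually_atTop.2 ⟨N, fun n hn => by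
      have := hN n hn
      rwa [Real.dist_eq, sub_zero, abs_of_nonneg (ht0 n)] at this⟩
  rw [Filter.eventually_atTop] at this
  obtain ⟨N, hN⟩ := this
  refine ⟨N, fun n hn => ?_⟩
  rw [Real.dist_eq, sub_zero, abs_of_nonneg dist_nonneg]
  have htn := hN n hn
  set x : E := u n - v n with hx
  set y : E := z n - v n with hy
  have hxn : ‖x‖ = dist (u n) (v n) := (dist_eq_norm _ _).symm
  have hyn : ‖y‖ = dist (z n) (v n) := (dist_eq_norm _ _).symm
  have hxyn : ‖x - y‖ = dist (u n) (z n) := by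
    rw [hx, hy, show u n - v n - (z n - v n) = u n - z n by abel, dist_eq_norm]
  set s : ℝ := max ‖x‖ ‖y‖ with hs
  have hsR : s ≤ R := by
    apply max_le
    · rw [hxn]; exact hdb _ _ (Or.inl (hu n)) (Or.inr (hv n))
    · rw [hyn]; exact hdb _ _ (Or.inl (hz n)) (Or.inr (hv n))
  rcases le_or_gt s 0 with hs0 | hs0
  · -- both x and y are zero
    have hx0 : ‖x‖ = 0 := le_antisymm (le_trans (le_max_left _ _) hs0) (norm_nonneg _)
    have hy0 : ‖y‖ = 0 := le_antisymm (le_trans (le_max_right _ _) hs0) (norm_nonneg _)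
    rw [← hxyn]
    calc ‖x - y‖ ≤ ‖x‖ + ‖y‖ := norm_sub_le _ _
      _ = 0 := by rw [hx0, hy0]; ring
      _ < ε := hε
  rcases lt_or_ge ‖x - y‖ (ε / (2 * R) * s) with hcase | hcase
  · rw [← hxyn]
    calc ‖x - y‖ < ε / (2 * R) * s := hcase
      _ ≤ ε / (2 * R) * R := by
          apply mul_le_mul_of_nonneg_left hsR (by positivity)
      _ = ε / 2 := by field_simp
      _ < ε := by linarith
  · -- uniform convexity case
    have huc := hδ s x y hs0 (le_max_left _ _) (le_max_right _ _) hcase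
    have h2c : 2 * c n ≤ (2 - δ) * s := le_trans (hmid n) huc
    have hscs : s ≤ c n + t n := by
      apply max_le
      · rw [hxn]; exact hau n
      · rw [hyn]; exact haz n
    have hcb : δ * c n ≤ (2 - δ) * t n := by nlinarith [hcn n, ht0 n]
    have hcb' : c n ≤ 2 * t n / δ := by
      rw [le_div_iff₀ hδ0]
      nlinarith [ht0 n]
    rw [← hxyn]
    calc ‖x - y‖ ≤ ‖x‖ + ‖y‖ := norm_sub_le _ _
      _ ≤ 2 * (c n + t n) := by
          rw [hxn, hyn]; linarith [hau n, haz n]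
      _ ≤ 2 * (2 * t n / δ + t n) := by linarith
      _ = (4 * t n + 2 * δ * t n) / δ := by field_simp; ring
      _ < ε := by
          rw [div_lt_iff₀ hδ0, hτ] at *
          nlinarith [ht0 n, htn, hδ1, hδ0]
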